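/- Let G be a finite abelian group of odd order, let A ⊆ G have density α, and let f = 1_A − α be the balanced function. Then |𝔼_{x,d ∈ G} 1_A(x)1_A(x+d)1_A(x+2d) − α³| ≤ 3‖f‖_{U²}. -/

import Mathlib

open Finset

/-- `‖f‖_{U²}⁴ = 𝔼_{x,h,h'} f(x)f(x+h)f(x+h')f(x+h+h')`. -/
noncomputable def U2pow4 {V : Type*} [AddCommGroup V] [Fintype V] (f : V → ℝ) : ℝ :=
  (∑ x : V, ∑ h : V, ∑ h' : V, f x * f (x + h) * f (x + h') * f (x + h + h')) /
    (Fintype.card V : ℝ) ^ 3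

section Aux

variable {G : Type*} [AddCommGroup G] [Fintype G]

lemma double_bijective (hodd : Odd (Fintype.card G)) :
    Function.Bijective (fun x : G => x + x) := by
  have h2 : (Nat.card G).Coprime 2 := by
    rw [Nat.card_eq_fintype_card]; exact hodd.coprime_two_right
  simpa [two_nsmul] using h2.nsmul_right_bijective

lemma sum_addLeft (f : G → ℝ) (t : G) : ∑ x : G, f (t + x) = ∑ x : G, f x :=
  Fintype.sum_bijective _ (Equiv.addLeft t).bijective _ _ (fun _ => rfl)

lemma sum_tdd (hodd : Odd (Fintype.card G)) (f : G → ℝ) (t : G) :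
    ∑ d : G, f (t + d + d) = ∑ x : G, f x := by
  have h1 : ∑ d : G, f (t + d + d) = ∑ y : G, f (t + y) :=
    Fintype.sum_bijective _ (double_bijective hodd) _ _ (fun d => by rw [add_assoc])
  rw [h1, sum_addLeft]

lemma abs_prod4_le_one {a b c d : ℝ} (ha : |a| ≤ 1) (hb : |b| ≤ 1) (hc : |c| ≤ 1)
    (hd : |d| ≤ 1) : a * b * c * d ≤ 1 := by
  have h : |a * b * c * d| ≤ 1 := by
    rw [abs_mul, abs_mul, abs_mul]
    exact mul_le_one₀ (mul_le_one₀ (mul_le_one₀ ha (abs_nonneg b) hb) (abs_nonneg c) hc)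
      (abs_nonneg d) hd
  exact le_of_abs_le h

end Aux

/-- In a finite abelian group of odd order, a set `A` of density `α` with balanced function
`f = 1_A − α` contains `(α³ ± 3‖f‖_{U²})·|G|²` three-term arithmetic progressions. -/
theorem count_3aps_of_uniform {G : Type*} [AddCommGroup G] [Fintype G] [DecidableEq G]
    (hodd : Odd (Fintype.card G)) (A : Finset G) (α : ℝ)
    (hα : α = (A.card : ℝ) / (Fintype.card G : ℝ))
    (f : G → ℝ) (hf : ∀ x, f x = (if x ∈ A then (1 : ℝ) else 0) - α) :
    |(∑ x : G, ∑ d : G,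
        (if x ∈ A then (1 : ℝ) else 0) * (if x + d ∈ A then (1 : ℝ) else 0) *
          (if x + d + d ∈ A then (1 : ℝ) else 0)) / (Fintype.card G : ℝ) ^ 2 - α ^ 3| ≤
      3 * (U2pow4 f) ^ ((1 : ℝ) / 4) := by
  classical
  have hNpos : 0 < Fintype.card G := Nat.pos_of_ne_zero (by rintro h; simp [h] at hodd)
  set n : ℝ := (Fintype.card G : ℝ) with hn
  have hn0 : (0 : ℝ) < n := by rw [hn]; exact_mod_cast hNpos
  -- basic facts about α and f
  have hα0 : 0 ≤ α := by rw [hα]; positivity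
  have hα1 : α ≤ 1 := by
    rw [hα, div_le_one hn0, hn]
    exact_mod_cast A.card_le_univ.trans_eq (Finset.card_univ)
  have hfabs : ∀ x, |f x| ≤ 1 := by
    intro x
    rw [hf x, abs_le]
    constructor <;> [skip; skip] <;> split_ifs <;> linarith
  have hfsq : ∀ x, f x ^ 2 ≤ 1 := fun x => by
    have h := hfabs x
    nlinarith [abs_nonneg (f x), sq_abs (f x)]
  have hsumf : ∑ x : G, f x = 0 := by
    have : ∑ x : G, f x = (A.card : ℝ) - α * n := by
      simp only [hf, Finset.sum_sub_distrib]
      congr 1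
      · simp
      · simp [hn, mul_comm]
    rw [this, hα]
    field_simp
    ring
  have hshift : ∀ t : G, ∑ d : G, f (t + d) = 0 := fun t => by
    rw [sum_addLeft f t, hsumf]
  have hdd : ∀ t : G, ∑ d : G, f (t + d + d) = 0 := fun t => by
    rw [sum_tdd hodd f t, hsumf]
  -- the main 3AP sum of the balanced function
  set S : ℝ := ∑ x : G, ∑ d : G, f x * f (x + d) * f (x + d + d) with hS
  -- Step 1: the count equals α³ n² + S
  have hT : (∑ x : G, ∑ d : G,
      (if x ∈ A then (1 : ℝ) else 0) * (if x + d ∈ A then (1 : ℝ) else 0) *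
        (if x + d + d ∈ A then (1 : ℝ) else 0)) = α ^ 3 * n ^ 2 + S := by
    have hexp : ∀ x d : G,
        (if x ∈ A then (1 : ℝ) else 0) * (if x + d ∈ A then (1 : ℝ) else 0) *
          (if x + d + d ∈ A then (1 : ℝ) else 0)
        = f x * f (x + d) * f (x + d + d)
          + α * (f x * f (x + d)) + α * (f x * f (x + d + d))
          + α * (f (x + d) * f (x + d + d))
          + α ^ 2 * f x + α ^ 2 * f (x + d) + α ^ 2 * f (x + d + d) + α ^ 3 := by
      intro x d
      have h1 : (if x ∈ A then (1 : ℝ) else 0) = f x + α := by rw [hf]; ring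
      have h2 : (if x + d ∈ A then (1 : ℝ) else 0) = f (x + d) + α := by rw [hf]; ring
      have h3 : (if x + d + d ∈ A then (1 : ℝ) else 0) = f (x + d + d) + α := by rw [hf]; ring
      rw [h1, h2, h3]; ring
    simp only [hexp, Finset.sum_add_distrib]
    have e1 : ∑ x : G, ∑ d : G, α * (f x * f (x + d)) = 0 :=
      Finset.sum_eq_zero fun x _ => by
        rw [← Finset.mul_sum, ← Finset.mul_sum, hshift x, mul_zero, mul_zero]
    have e2 : ∑ x : G, ∑ d : G, α * (f x * f (x + d + d)) = 0 :=
      Finset.sum_eq_zero fun x _ => by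
        rw [← Finset.mul_sum, ← Finset.mul_sum, hdd x, mul_zero, mul_zero]
    have e3 : ∑ x : G, ∑ d : G, α * (f (x + d) * f (x + d + d)) = 0 := by
      rw [Finset.sum_comm]
      have hreidx : ∀ d : G, ∑ x : G, α * (f (x + d) * f (x + d + d))
          = ∑ y : G, α * (f y * f (y + d)) := by
        intro d
        exact Fintype.sum_bijective (· + d) (Equiv.addRight d).bijective _ _ fun x => rfl
      rw [Finset.sum_congr rfl fun d _ => hreidx d, Finset.sum_comm]
      exact Finset.sum_eq_zero fun y _ => by
        rw [← Finset.mul_sum, ← Finset.mul_sum, hshift y, mul_zero, mul_zero]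
    have e4 : ∑ x : G, ∑ d : G, α ^ 2 * f x = 0 := by
      calc ∑ x : G, ∑ _d : G, α ^ 2 * f x
          = ∑ x : G, (Fintype.card G : ℝ) * (α ^ 2 * f x) := by
            simp [Finset.card_univ, mul_comm]
        _ = (Fintype.card G : ℝ) * α ^ 2 * ∑ x : G, f x := by
            rw [Finset.mul_sum]; exact Finset.sum_congr rfl fun x _ => by ring
        _ = 0 := by rw [hsumf, mul_zero]
    have e5 : ∑ x : G, ∑ d : G, α ^ 2 * f (x + d) = 0 :=
      Finset.sum_eq_zero fun x _ => by
        rw [← Finset.mul_sum, hshift x, mul_zero]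
    have e6 : ∑ x : G, ∑ d : G, α ^ 2 * f (x + d + d) = 0 :=
      Finset.sum_eq_zero fun x _ => by
        rw [← Finset.mul_sum, hdd x, mul_zero]
    have e7 : ∑ _x : G, ∑ _d : G, (α ^ 3 : ℝ) = α ^ 3 * n ^ 2 := by
      simp only [Finset.sum_const, Finset.card_univ, nsmul_eq_mul, hn]
      ring
    rw [e1, e2, e3, e4, e5, e6, e7]
    ring
  -- Step 2: rewrite S using the symmetric form
  set g : G → ℝ := fun y => ∑ d : G, f (y - d) * f (y + d) with hg
  have hS2 : S = ∑ y : G, f y * g y := by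
    rw [hS, Finset.sum_comm]
    have h1 : ∀ d : G, ∑ x : G, f x * f (x + d) * f (x + d + d)
        = ∑ y : G, f (y - d) * f y * f (y + d) := by
      intro d
      refine Fintype.sum_bijective (· + d) (Equiv.addRight d).bijective _ _ fun x => ?_
      simp only [add_sub_cancel_right]
    rw [Finset.sum_congr rfl fun d _ => h1 d, Finset.sum_comm]
    refine Finset.sum_congr rfl fun y _ => ?_
    rw [hg, Finset.mul_sum]
    exact Finset.sum_congr rfl fun d _ => by ring
  -- Step 3: ∑ g² equals the U² quadruple sum
  have hg2 : ∑ y : G, g y ^ 2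
      = ∑ x : G, ∑ h : G, ∑ h' : G, f x * f (x + h) * f (x + h') * f (x + h + h') := by
    have lhs_eq : ∑ y : G, g y ^ 2
        = ∑ p : G × G × G,
            f (p.1 - p.2.1) * f (p.1 + p.2.1) * (f (p.1 - p.2.2) * f (p.1 + p.2.2)) := by
      rw [Fintype.sum_prod_type]
      refine Finset.sum_congr rfl fun y _ => ?_
      rw [Fintype.sum_prod_type, hg, sq, Finset.sum_mul_sum]
    have rhs_eq : (∑ x : G, ∑ h : G, ∑ h' : G, f x * f (x + h) * f (x + h') * f (x + h + h'))
        = ∑ p : G × G × G,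
            f p.1 * f (p.1 + p.2.1) * f (p.1 + p.2.2) * f (p.1 + p.2.1 + p.2.2) := by
      rw [Fintype.sum_prod_type]
      exact Finset.sum_congr rfl fun x _ => by rw [Fintype.sum_prod_type]
    rw [lhs_eq, rhs_eq]
    have hdbij := double_bijective hodd
    have ebij : Function.Bijective
        (fun p : G × G × G => (p.1 - p.2.1, p.2.1 - p.2.2, p.2.1 + p.2.2)) := by
      rw [← Finite.injective_iff_bijective]
      rintro ⟨y, d, d'⟩ ⟨z, e, e'⟩ hpq
      simp only [Prod.mk.injEq] at hpq
      obtain ⟨h1, h2, h3⟩ := hpq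
      have hde : d + d = e + e := by
        have h4 : d - d' + (d + d') = e - e' + (e + e') := by rw [h2, h3]
        calc d + d = d - d' + (d + d') := by abel
          _ = e - e' + (e + e') := h4
          _ = e + e := by abel
      have hd : d = e := hdbij.injective hde
      have hd' : d' = e' := by
        have := h3; rw [hd] at this; exact add_left_cancel this
      have hy : y = z := by
        have := h1; rw [hd] at this
        exact sub_left_injective this
      exact Prod.ext hy (Prod.ext hd hd')
    refine Fintype.sum_bijective _ ebij _ _ ?_
    rintro ⟨y, d, d'⟩
    simp only
    have a1 : y - d + (d - d') = y - d' := by abel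
    have a2 : y - d + (d + d') = y + d' := by abel
    have a3 : y - d + (d - d') + (d + d') = y + d := by abel
    rw [a3, a1, a2]
    ring
  -- Step 4: bounds on U2pow4
  have hquad_nonneg : 0 ≤ ∑ x : G, ∑ h : G, ∑ h' : G,
      f x * f (x + h) * f (x + h') * f (x + h + h') := by
    rw [← hg2]
    exact Finset.sum_nonneg fun y _ => sq_nonneg _
  have hquad_le : (∑ x : G, ∑ h : G, ∑ h' : G,
      f x * f (x + h) * f (x + h') * f (x + h + h')) ≤ n ^ 3 := by
    calc (∑ x : G, ∑ h : G, ∑ h' : G, f x * f (x + h) * f (x + h') * f (x + h + h'))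
        ≤ ∑ _x : G, ∑ _h : G, ∑ _h' : G, (1 : ℝ) := by
          refine Finset.sum_le_sum fun x _ => Finset.sum_le_sum fun h _ =>
            Finset.sum_le_sum fun h' _ => ?_
          exact abs_prod4_le_one (hfabs _) (hfabs _) (hfabs _) (hfabs _)
      _ = n ^ 3 := by
          simp only [Finset.sum_const, Finset.card_univ, nsmul_eq_mul, mul_one, hn]
          ring
  have hU0 : 0 ≤ U2pow4 f := div_nonneg hquad_nonneg (by positivity)
  have hU1 : U2pow4 f ≤ 1 := by
    rw [U2pow4, div_le_one (by positivity)]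
    exact hquad_le
  have hgU : ∑ y : G, g y ^ 2 = n ^ 3 * U2pow4 f := by
    rw [hg2, U2pow4]
    field_simp
    rw [hn]
  -- Step 5: Cauchy–Schwarz
  have hCS : S ^ 2 ≤ n ^ 4 * U2pow4 f := by
    have h1 : S ^ 2 ≤ (∑ y : G, f y ^ 2) * ∑ y : G, g y ^ 2 := by
      rw [hS2]
      exact Finset.sum_mul_sq_le_sq_mul_sq Finset.univ f g
    have h2 : (∑ y : G, f y ^ 2) ≤ n := by
      calc (∑ y : G, f y ^ 2) ≤ ∑ _y : G, (1 : ℝ) := Finset.sum_le_sum fun y _ => hfsq y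
        _ = n := by simp [hn]
    have h3 : 0 ≤ ∑ y : G, g y ^ 2 := Finset.sum_nonneg fun y _ => sq_nonneg _
    calc S ^ 2 ≤ (∑ y : G, f y ^ 2) * ∑ y : G, g y ^ 2 := h1
      _ ≤ n * ∑ y : G, g y ^ 2 := mul_le_mul_of_nonneg_right h2 h3
      _ = n ^ 4 * U2pow4 f := by rw [hgU]; ring
  -- Step 6: conclude
  set t : ℝ := (U2pow4 f) ^ ((1 : ℝ) / 4) with ht
  have ht0 : 0 ≤ t := Real.rpow_nonneg hU0 _
  have ht1 : t ≤ 1 := Real.rpow_le_one hU0 hU1 (by norm_num)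
  have htsq : t ^ 2 = (U2pow4 f) ^ ((1 : ℝ) / 2) := by
    rw [ht, ← Real.rpow_natCast ((U2pow4 f) ^ ((1:ℝ)/4)) 2, ← Real.rpow_mul hU0]
    norm_num
  have hLHS : (∑ x : G, ∑ d : G,
      (if x ∈ A then (1 : ℝ) else 0) * (if x + d ∈ A then (1 : ℝ) else 0) *
        (if x + d + d ∈ A then (1 : ℝ) else 0)) / n ^ 2 - α ^ 3 = S / n ^ 2 := by
    rw [hT]
    field_simp
    ring
  rw [hLHS, abs_div, abs_of_pos (show (0:ℝ) < n ^ 2 by positivity)]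
  have hsq : (|S| / n ^ 2) ^ 2 ≤ U2pow4 f := by
    rw [div_pow, sq_abs, div_le_iff₀ (by positivity)]
    calc S ^ 2 ≤ n ^ 4 * U2pow4 f := hCS
      _ = U2pow4 f * (n ^ 2) ^ 2 := by ring
  have hle : |S| / n ^ 2 ≤ t ^ 2 := by
    rw [htsq, ← Real.sqrt_eq_rpow]
    exact (Real.le_sqrt (by positivity) hU0).mpr hsq
  calc |S| / n ^ 2 ≤ t ^ 2 := hle
    _ ≤ 3 * t := by nlinarith
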